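/- arXiv:1905.12326 — 2 statements merged into one kernel-verified Lean document; each statement's English description precedes it below -/
import Mathlib

section
/- Fix β ∈ (0,1) and let p = p(N) ∈ (0,1] be a sequence with p(N)³N² → ∞ as N → ∞. Then the expected partition function satisfies E[Z_N(β)] ~ e^{(1-p)β²/(8p)} · 2^N / √(1-β) as N → ∞, where a_N ~ b_N means a_N/b_N → 1. -/
open MeasureTheory ProbabilityTheory Filter
open scoped Classical

noncomputable section

/-- The spin value `±1` associated to a Boolean. -/
def spin (b : Bool) : ℝ := if b then 1 else -1

/-- The total magnetization `|σ| = σ₁ + ⋯ + σ_N` of a spin configuration. -/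
def mag {N : ℕ} (σ : Fin N → Bool) : ℝ := ∑ i, spin (σ i)

/-- The overlap `|στ| = ∑ σᵢτᵢ` of two spin configurations. -/
def magPair {N : ℕ} (σ τ : Fin N → Bool) : ℝ := ∑ i, spin (σ i) * spin (τ i)

/-- The Hamiltonian `H(σ) = -(1/(2Np)) ∑_{i,j} ε_{i,j} σᵢ σⱼ` of the Ising model on the
directed Erdős–Rényi graph with edge indicators `ε`. -/
def hamil (N : ℕ) (p : ℝ) (ε : Fin N × Fin N → Bool) (σ : Fin N → Bool) : ℝ :=
  -(1 / (2 * N * p)) * ∑ i : Fin N, ∑ j : Fin N,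
    (if ε (i, j) then (1 : ℝ) else 0) * spin (σ i) * spin (σ j)

/-- The joint law of the i.i.d. Bernoulli(p) edge indicators `(ε_{i,j})_{i,j=1}^N`. -/
def bern (N : ℕ) (p : ℝ) : Measure (Fin N × Fin N → Bool) :=
  Measure.pi fun _ => (PMF.bernoulli (min 1 (Real.toNNReal p)) (min_le_left _ _)).toMeasure

/-- The generalized partition function `Z_N(β, g) = ∑_σ e^{-βH(σ)} g(|σ|/√N)`. -/
def ZNg (N : ℕ) (p β : ℝ) (g : ℝ → ℝ) (ε : Fin N × Fin N → Bool) : ℝ :=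
  ∑ σ : Fin N → Bool, Real.exp (-β * hamil N p ε σ) * g (mag σ / Real.sqrt N)

/-- The expectation `𝔼 Z_N(β, g)` over the randomness of the graph. -/
def EZNg (N : ℕ) (p β : ℝ) (g : ℝ → ℝ) : ℝ :=
  ∫ ε, ZNg N p β g ε ∂(bern N p)

/-- The Gaussian expectation `𝔼_ξ [g(ξ) e^{β ξ²/2}]` for a standard normal `ξ`. -/
def gaussExp (β : ℝ) (g : ℝ → ℝ) : ℝ :=
  ∫ x, g x * Real.exp (β * x ^ 2 / 2) ∂(gaussianReal 0 1)

/-! ### Auxiliary elementary inequalities -/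

section Aux

open Real

lemma my_log_le {t : ℝ} (ht : -1 < t) : Real.log (1+t) ≤ t := by
  have := Real.log_le_sub_one_of_pos (x := 1+t) (by linarith)
  linarith

lemma my_le_log {t : ℝ} (ht : -(1/2:ℝ) ≤ t) : t - 2*t^2 ≤ Real.log (1+t) := by
  have h1 : (0:ℝ) < 1 + t := by linarith
  have := Real.one_sub_inv_le_log_of_pos h1
  have h2 : 1 - (1+t)⁻¹ = t / (1+t) := by field_simp; ring
  rw [h2] at this
  have h3 : t - 2*t^2 ≤ t / (1+t) := by
    rw [le_div_iff₀ h1]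
    nlinarith [sq_nonneg t, sq_nonneg (t*t)]
  linarith

private lemma mono_aux {f f' : ℝ → ℝ} (hd : ∀ s, HasDerivAt f (f' s) s)
    (hn : ∀ s, 0 < s → 0 ≤ f' s) : MonotoneOn f (Set.Ici 0) := by
  apply monotoneOn_of_deriv_nonneg (convex_Ici 0)
  · exact fun s _ => (hd s).continuousAt.continuousWithinAt
  · exact fun s _ => (hd s).differentiableAt.differentiableWithinAt
  · intro s hs
    rw [interior_Ici] at hs
    rw [(hd s).deriv]
    exact hn s hs

lemma my_cosh_lower (x : ℝ) : 1 + x^2/2 ≤ Real.cosh x := by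
  have key : ∀ y : ℝ, 0 ≤ y → 1 + y^2/2 ≤ Real.cosh y := by
    intro y hy
    have h : MonotoneOn (fun s : ℝ => Real.cosh s - 1 - s^2/2) (Set.Ici 0) := by
      apply mono_aux (f' := fun s => Real.sinh s - s)
      · intro s
        have h1 := (Real.hasDerivAt_cosh s).sub_const 1
        have h2 : HasDerivAt (fun s : ℝ => s^2/2) s s := by
          simpa using (hasDerivAt_pow 2 s).div_const 2
        exact h1.sub h2
      · intro s hs
        have := Real.self_le_sinh_iff.2 (le_of_lt hs)
        linarith
    have := h (Set.self_mem_Ici) hy hy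
    simp [Real.cosh_zero] at this
    linarith
  rcases le_total 0 x with hx | hx
  · exact key x hx
  · have := key (-x) (by linarith)
    simpa [Real.cosh_neg] using this

lemma my_sinh_le (x : ℝ) (hx : 0 ≤ x) : Real.sinh x ≤ x * Real.cosh x := by
  have h : MonotoneOn (fun s : ℝ => s * Real.cosh s - Real.sinh s) (Set.Ici 0) := by
    apply mono_aux (f' := fun s => s * Real.sinh s)
    · intro s
      have h1 := (hasDerivAt_id s).mul (Real.hasDerivAt_cosh s)
      have h2 := h1.sub (Real.hasDerivAt_sinh s)
      exact h2.congr_deriv (by show 1 * Real.cosh s + s * Real.sinh s - Real.cosh s = s * Real.sinh s; ring)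
    · intro s hs
      exact mul_nonneg hs.le (Real.sinh_nonneg_iff.2 hs.le)
  have := h (Set.self_mem_Ici) hx hx
  simp at this
  linarith

lemma my_cosh_upper {x : ℝ} (hx : |x| ≤ 1) : Real.cosh x ≤ 1 + x^2/2 + (3/8)*x^4 := by
  have h1 := Real.cosh_le_exp_half_sq x
  have hx2 : x^2 ≤ 1 := by nlinarith [abs_nonneg x, sq_abs x, abs_le.1 hx]
  have h2 : Real.exp (x^2/2) ≤ 1 + x^2/2 + (3/4)*(x^2/2)^2 := by
    have hb := Real.exp_bound' (x := x^2/2) (by positivity) (by linarith) (n := 2) (by norm_num)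
    simp [Finset.sum_range_succ] at hb
    norm_num at hb
    linarith
  nlinarith [h1, h2]

lemma log_cosh_le (s : ℝ) : Real.log (Real.cosh s) ≤ s^2/2 := by
  have := Real.cosh_le_exp_half_sq s
  calc Real.log (Real.cosh s) ≤ Real.log (Real.exp (s^2/2)) :=
        Real.log_le_log (Real.cosh_pos _) this
    _ = s^2/2 := Real.log_exp _

lemma le_log_cosh (s : ℝ) : s^2/2 - s^4/2 ≤ Real.log (Real.cosh s) := by
  have h1 : Real.log (1 + s^2/2) ≤ Real.log (Real.cosh s) :=
    Real.log_le_log (by positivity) (my_cosh_lower s)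
  have h2 : s^2/2 - 2*(s^2/2)^2 ≤ Real.log (1 + s^2/2) := my_le_log (by nlinarith [sq_nonneg s])
  nlinarith [h1, h2]

lemma tendsto_zero_of_pow3 {f : ℕ → ℝ} (h0 : ∀ n, 0 ≤ f n)
    (h : Tendsto (fun n => (f n)^3) atTop (nhds 0)) : Tendsto f atTop (nhds 0) := by
  rw [Metric.tendsto_atTop] at h ⊢
  intro ε hε
  obtain ⟨M, hM⟩ := h (ε^3) (by positivity)
  refine ⟨M, fun n hn => ?_⟩
  have h1 := hM n hn
  rw [Real.dist_eq, sub_zero, abs_of_nonneg (pow_nonneg (h0 n) 3)] at h1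
  rw [Real.dist_eq, sub_zero, abs_of_nonneg (h0 n)]
  by_contra hcon
  push_neg at hcon
  have : ε^3 ≤ (f n)^3 := pow_le_pow_left₀ hε.le hcon 3
  linarith

/-! ### Gaussian integrals -/

lemma gauss_integrable (r : ℝ) : Integrable (fun y : ℝ => Real.exp (-(y^2/2) + r*y)) := by
  have h : ∀ y : ℝ, -(y^2/2) + r*y = r^2/2 + (-(1/2) * (y - r)^2) := by intro y; ring
  simp_rw [h, Real.exp_add]
  apply Integrable.const_mul
  have hbase := integrable_exp_neg_mul_sq (b := (1/2:ℝ)) (by norm_num)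
  simpa using hbase.comp_sub_right r

lemma gauss_mgf (r : ℝ) :
    ∫ y : ℝ, Real.exp (-(y^2/2) + r*y) = Real.sqrt (2*π) * Real.exp (r^2/2) := by
  have h : ∀ y : ℝ, -(y^2/2) + r*y = r^2/2 + (-(1/2) * (y - r)^2) := by intro y; ring
  simp_rw [h, Real.exp_add]
  rw [MeasureTheory.integral_const_mul,
    integral_sub_right_eq_self (fun y => Real.exp (-(1/2) * y^2)) r, integral_gaussian, mul_comm]
  congr 1
  rw [div_div_eq_mul_div, div_one]
  norm_num
  rw [mul_comm]

/-! ### Exact computation of the expected partition function -/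

lemma sum_prod_eq {ι κ : Type*} [Fintype ι] [Fintype κ] [DecidableEq ι] (h : ι → κ → ℝ) :
    ∑ ε : ι → κ, ∏ k, h k (ε k) = ∏ k, ∑ b, h k b := by
  rw [Finset.prod_univ_sum, Fintype.piFinset_univ]

lemma bern_singleton (N : ℕ) {p : ℝ} (hp0 : 0 ≤ p) (hp1 : p ≤ 1) (ε : Fin N × Fin N → Bool) :
    ((bern N p) {ε}).toReal = ∏ k : Fin N × Fin N, (if ε k then p else 1 - p) := by
  have hmin : min 1 (Real.toNNReal p) = Real.toNNReal p :=
    min_eq_right (Real.toNNReal_le_one.2 hp1)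
  have hs : ({ε} : Set (Fin N × Fin N → Bool)) = Set.pi Set.univ (fun k => {ε k}) := by
    rw [Set.univ_pi_singleton]
  rw [bern, hs, Measure.pi_pi]
  rw [ENNReal.toReal_prod]
  apply Finset.prod_congr rfl
  intro k _
  rw [PMF.toMeasure_apply_singleton _ _ (measurableSet_singleton _)]
  rw [PMF.bernoulli_apply, hmin]
  cases hb : ε k
  · simp only [Bool.cond_false]
    rw [ENNReal.coe_toReal, NNReal.coe_sub (Real.toNNReal_le_one.2 hp1)]
    simp [hp0]
  · simp [hp0]

lemma EZ_sum (N : ℕ) {p : ℝ} (β : ℝ) (hp0 : 0 ≤ p) (hp1 : p ≤ 1) :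
    EZNg N p β (fun _ => 1) = ∑ σ : Fin N → Bool, ∏ k : Fin N × Fin N,
      (1 - p + p * Real.exp (β / (2 * N * p) * (spin (σ k.1) * spin (σ k.2)))) := by
  classical
  set cc := β / (2 * (N:ℝ) * p) with hcc
  have h1 : EZNg N p β (fun _ => 1)
      = ∑ ε : Fin N × Fin N → Bool, ((bern N p) {ε}).toReal • ZNg N p β (fun _ => 1) ε := by
    haveI : IsProbabilityMeasure (bern N p) := by unfold bern; infer_instance
    rw [EZNg]; exact integral_fintype (Integrable.of_finite)
  have hz : ∀ ε, ZNg N p β (fun _ => 1) ε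
      = ∑ σ : Fin N → Bool, ∏ k : Fin N × Fin N,
          Real.exp (cc * ((if ε k then (1:ℝ) else 0) * spin (σ k.1) * spin (σ k.2))) := by
    intro ε
    rw [ZNg]
    apply Finset.sum_congr rfl
    intro σ _
    rw [mul_one]
    rw [← Real.exp_sum]
    congr 1
    rw [hamil, Fintype.sum_prod_type]
    simp only [← Finset.mul_sum]
    ring
  rw [h1]
  simp only [hz, smul_eq_mul, bern_singleton N hp0 hp1]
  simp only [Finset.mul_sum]
  rw [Finset.sum_comm]
  apply Finset.sum_congr rfl
  intro σ _
  have : ∀ ε : Fin N × Fin N → Bool,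
      (∏ k : Fin N × Fin N, (if ε k then p else 1 - p)) *
        (∏ k : Fin N × Fin N, Real.exp (cc * ((if ε k then (1:ℝ) else 0) * spin (σ k.1) * spin (σ k.2))))
      = ∏ k : Fin N × Fin N, ((if ε k then p else 1 - p) *
          Real.exp (cc * ((if ε k then (1:ℝ) else 0) * spin (σ k.1) * spin (σ k.2)))) := by
    intro ε
    rw [Finset.prod_mul_distrib]
  simp only [this]
  have hsp := sum_prod_eq (ι := Fin N × Fin N) (κ := Bool) (fun k b => (if b then p else 1 - p) *
      Real.exp (cc * ((if b then (1:ℝ) else 0) * spin (σ k.1) * spin (σ k.2))))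
  rw [hsp]
  apply Finset.prod_congr rfl
  intro k _
  rw [Fintype.sum_bool]
  norm_num
  ring

/-! ### The functions `F` and `G` -/

def Aplus (p c : ℝ) : ℝ := 1 - p + p * Real.exp c
def FF (p c : ℝ) : ℝ := Real.log (Aplus p c) + Real.log (Aplus p (-c))
def GG (p c : ℝ) : ℝ := Real.log (Aplus p c) - Real.log (Aplus p (-c))

lemma Aplus_pos {p : ℝ} (hp0 : 0 < p) (hp1 : p ≤ 1) (c : ℝ) : 0 < Aplus p c := by
  have h : 0 < p * Real.exp c := by positivity
  unfold Aplus; linarith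

lemma GG_nonneg {p : ℝ} (hp0 : 0 < p) (hp1 : p ≤ 1) {c : ℝ} (hc : 0 ≤ c) : 0 ≤ GG p c := by
  have h : Aplus p (-c) ≤ Aplus p c := by
    unfold Aplus
    have := Real.exp_le_exp.2 (by linarith : -c ≤ c)
    nlinarith
  have := Real.log_le_log (Aplus_pos hp0 hp1 (-c)) h
  unfold GG; linarith

lemma factor_eq {p : ℝ} (hp0 : 0 < p) (hp1 : p ≤ 1) (c : ℝ) (b b' : Bool) :
    1 - p + p * Real.exp (c * (spin b * spin b'))
      = Real.exp (FF p c / 2 + GG p c / 2 * (spin b * spin b')) := by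
  have h1 : spin b * spin b' = 1 ∨ spin b * spin b' = -1 := by
    cases b <;> cases b' <;> simp [spin] <;> norm_num
  rcases h1 with h | h <;> rw [h]
  · rw [mul_one, mul_one]
    have : FF p c / 2 + GG p c / 2 = Real.log (Aplus p c) := by rw [FF, GG]; ring
    rw [this, Real.exp_log (Aplus_pos hp0 hp1 c)]
    rfl
  · rw [mul_neg_one, mul_neg_one]
    have : FF p c / 2 + -(GG p c / 2) = Real.log (Aplus p (-c)) := by rw [FF, GG]; ring
    rw [this, Real.exp_log (Aplus_pos hp0 hp1 (-c))]
    simp only [Aplus]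

lemma sum_spin_sq {N : ℕ} (σ : Fin N → Bool) :
    ∑ k : Fin N × Fin N, spin (σ k.1) * spin (σ k.2) = (mag σ)^2 := by
  rw [Fintype.sum_prod_type, mag, sq, Finset.sum_mul_sum]

lemma prod_factor {N : ℕ} {p : ℝ} (hp0 : 0 < p) (hp1 : p ≤ 1) (c : ℝ) (σ : Fin N → Bool) :
    ∏ k : Fin N × Fin N, (1 - p + p * Real.exp (c * (spin (σ k.1) * spin (σ k.2))))
      = Real.exp ((N:ℝ)^2 * FF p c / 2 + GG p c * (mag σ)^2 / 2) := by
  have : ∀ k : Fin N × Fin N, (1 - p + p * Real.exp (c * (spin (σ k.1) * spin (σ k.2))))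
      = Real.exp (FF p c / 2 + GG p c / 2 * (spin (σ k.1) * spin (σ k.2))) :=
    fun k => factor_eq hp0 hp1 c _ _
  simp only [this]
  rw [← Real.exp_sum, Finset.sum_add_distrib, Finset.sum_const, ← Finset.mul_sum, sum_spin_sq]
  congr 1
  simp [Fintype.card_prod]
  ring

lemma sum_exp_mag {N : ℕ} (c' : ℝ) :
    ∑ σ : Fin N → Bool, Real.exp (c' * mag σ) = (2 * Real.cosh c')^N := by
  have h1 : ∀ σ : Fin N → Bool, Real.exp (c' * mag σ) = ∏ i : Fin N, Real.exp (c' * spin (σ i)) := by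
    intro σ
    rw [← Real.exp_sum, mag, Finset.mul_sum]
  simp only [h1]
  rw [sum_prod_eq (fun (_ : Fin N) (b : Bool) => Real.exp (c' * spin b))]
  rw [Finset.prod_const]
  congr 1
  · rw [Fintype.sum_bool]
    rw [Real.cosh_eq]
    simp [spin]
    ring
  · simp

lemma sum_exp_quad (N : ℕ) {a : ℝ} (ha : 0 ≤ a) :
    ∑ σ : Fin N → Bool, Real.exp (a * (mag σ)^2 / 2)
      = (Real.sqrt (2*π))⁻¹ * ∫ y : ℝ, Real.exp (-(y^2/2)) * (2 * Real.cosh (Real.sqrt a * y))^N := by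
  have hsq : Real.sqrt (2*π) ≠ 0 := by positivity
  have hmgf : ∀ σ : Fin N → Bool, Real.exp (a * (mag σ)^2 / 2)
      = (Real.sqrt (2*π))⁻¹ * ∫ y : ℝ, Real.exp (-(y^2/2) + (Real.sqrt a * mag σ) * y) := by
    intro σ
    rw [gauss_mgf]
    rw [inv_mul_cancel_left₀ hsq]
    congr 1
    rw [mul_pow, Real.sq_sqrt ha]
  simp only [hmgf]
  rw [← Finset.mul_sum]
  congr 1
  rw [← integral_finset_sum _ (fun σ _ => gauss_integrable _)]
  congr 1
  funext y
  have : ∀ σ : Fin N → Bool, Real.exp (-(y^2/2) + (Real.sqrt a * mag σ) * y)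
      = Real.exp (-(y^2/2)) * Real.exp ((Real.sqrt a * y) * mag σ) := by
    intro σ
    rw [← Real.exp_add]
    ring_nf
  simp only [this]
  rw [← Finset.mul_sum, sum_exp_mag]

/-! ### Approximation of `F` and `G` -/

lemma FF_eq {p : ℝ} (hp0 : 0 < p) (hp1 : p ≤ 1) (c : ℝ) :
    FF p c = Real.log (1 + (p - p^2) * (2 * Real.cosh c - 2)) := by
  rw [FF, ← Real.log_mul (Aplus_pos hp0 hp1 c).ne' (Aplus_pos hp0 hp1 (-c)).ne']
  congr 1
  rw [Aplus, Aplus, Real.cosh_eq]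
  have h1 : Real.exp c * Real.exp (-c) = 1 := by rw [← Real.exp_add]; simp
  linear_combination (p^2) * h1

lemma FF_approx {p c : ℝ} (hp0 : 0 < p) (hp1 : p ≤ 1) (hc0 : 0 ≤ c) (hc1 : c ≤ 1) :
    |FF p c - (p - p^2)*c^2| ≤ 3 * p * c^4 := by
  set q := p - p^2 with hq
  have hq0 : 0 ≤ q := by rw [hq]; nlinarith
  have hq4 : q ≤ 1/4 := by rw [hq]; nlinarith [sq_nonneg (p - 1/2)]
  set w := 2 * Real.cosh c - 2 with hw
  have hw1 : c^2 ≤ w := by have := my_cosh_lower c; rw [hw]; linarith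
  have hw2 : w ≤ c^2 + (3/4)*c^4 := by
    have := my_cosh_upper (x := c) (by rwa [abs_of_nonneg hc0])
    rw [hw]; linarith
  have hqw0 : 0 ≤ q * w := mul_nonneg hq0 (by nlinarith)
  have hup : FF p c ≤ q * c^2 + (3/4) * q * c^4 := by
    rw [FF_eq hp0 hp1]
    have := my_log_le (t := q * w) (lt_of_lt_of_le (by norm_num) hqw0)
    have e1 := mul_le_mul_of_nonneg_left hw2 hq0
    calc Real.log (1 + q * w) ≤ q * w := this
      _ ≤ q * c^2 + (3/4) * q * c^4 := by
          linarith [e1, (by ring : q*(c^2+(3/4)*c^4) = q*c^2 + (3/4)*q*c^4)]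
  have hlo : q * c^2 - 3 * p * c^4 ≤ FF p c := by
    rw [FF_eq hp0 hp1]
    have h1 := my_le_log (t := q * w) (le_trans (by norm_num) hqw0)
    have hc2 : c^2 ≤ 1 := by nlinarith
    have hc4 : c^4 ≤ c^2 := by nlinarith [sq_nonneg c, sq_nonneg (c^2)]
    have hqw_ub : q * w ≤ 2 * q * c^2 := by
      have e1 := mul_le_mul_of_nonneg_left hw2 hq0
      have e2 := mul_le_mul_of_nonneg_left hc4 hq0
      nlinarith
    have hc40 : (0:ℝ) ≤ c^4 := by positivity
    have h2 : (q*w)^2 ≤ (2*q*c^2)^2 := pow_le_pow_left₀ hqw0 hqw_ub 2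
    have h2' : (2*q*c^2)^2 = (4*q^2)*c^4 := by ring
    have h4 : 4*q^2 ≤ q := by nlinarith
    have h4' : (4*q^2)*c^4 ≤ q*c^4 := mul_le_mul_of_nonneg_right h4 hc40
    have hqp : q ≤ p := by rw [hq]; nlinarith
    have h5 : q * c^2 ≤ q * w := mul_le_mul_of_nonneg_left hw1 hq0
    have h6 : (q*w)^2 ≤ q * c^4 := by linarith
    have h7 : q * c^4 ≤ p * c^4 := mul_le_mul_of_nonneg_right hqp hc40
    have h8 : 0 ≤ p * c^4 := by positivity
    calc q * c^2 - 3 * p * c^4 ≤ q * w - 2*(q*w)^2 := by linarith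
      _ ≤ Real.log (1 + q * w) := h1
  have hqp : q ≤ p := by rw [hq]; nlinarith
  have hc40 : (0:ℝ) ≤ c^4 := by positivity
  have h7 : q * c^4 ≤ p * c^4 := mul_le_mul_of_nonneg_right hqp hc40
  have h8 : 0 ≤ p * c^4 := by positivity
  rw [abs_le]
  constructor
  · linarith
  · nlinarith [h7, h8, hq0, hc40]

lemma GG_approx {p c : ℝ} (hp0 : 0 < p) (hp1 : p ≤ 1) (hc0 : 0 ≤ c) (hc1 : c ≤ 1)
    (hpc : p * c ≤ 1/2) :
    |GG p c - 2*p*Real.sinh c| ≤ 8 * p^2 * c^2 := by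
  set u := p * (Real.exp c - 1) with hu
  set v := p * (Real.exp (-c) - 1) with hv
  have hAu : Aplus p c = 1 + u := by rw [Aplus, hu]; ring
  have hAv : Aplus p (-c) = 1 + v := by rw [Aplus, hv]; ring
  have hexpc : Real.exp c ≤ 1 + 2*c := by
    rcases eq_or_lt_of_le hc0 with h | h
    · rw [← h]; simp
    · have hb := Real.exp_bound' hc0 hc1 (n := 2) (by norm_num)
      simp [Finset.sum_range_succ] at hb
      norm_num at hb
      nlinarith
  have hu0 : 0 ≤ u := by
    have := Real.one_le_exp hc0
    nlinarith
  have hu1 : u ≤ 2*p*c := by nlinarith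
  have hv0 : v ≤ 0 := by
    have := Real.exp_le_one_iff.2 (by linarith : -c ≤ 0)
    nlinarith
  have hv1 : -(p*c) ≤ v := by
    have := Real.add_one_le_exp (-c)
    nlinarith
  have huv : u - v = 2 * p * Real.sinh c := by
    rw [hu, hv, Real.sinh_eq]
    ring
  have hlogu_ub : Real.log (1+u) ≤ u := my_log_le (by linarith)
  have hlogu_lb : u - 2*u^2 ≤ Real.log (1+u) := my_le_log (by linarith)
  have hlogv_ub : Real.log (1+v) ≤ v := my_log_le (by nlinarith)
  have hlogv_lb : v - 2*v^2 ≤ Real.log (1+v) := my_le_log (by nlinarith)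
  have hGG : GG p c = Real.log (1+u) - Real.log (1+v) := by rw [GG, hAu, hAv]
  have hu2 : u^2 ≤ 4*p^2*c^2 := by nlinarith
  have hv2 : v^2 ≤ p^2*c^2 := by nlinarith
  rw [abs_le]
  constructor
  · have : GG p c ≥ (u - 2*u^2) - v := by rw [hGG]; linarith
    nlinarith
  · have : GG p c ≤ u - (v - 2*v^2) := by rw [hGG]; linarith
    nlinarith

/-! ### The dominated convergence limit -/

lemma partB {β : ℝ} (hβ0 : 0 < β) (hβ1 : β < 1) (t : ℕ → ℝ)
    (hT : Tendsto (fun N : ℕ => (N:ℝ) * (t N)^2) atTop (nhds β)) :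
    Tendsto (fun N => ∫ y : ℝ, Real.exp (-(y^2/2)) * (Real.cosh (t N * y))^N) atTop
      (nhds (Real.sqrt (2*π/(1-β)))) := by
  set β' : ℝ := (1+β)/2 with hβ'
  have hβ'1 : β' < 1 := by rw [hβ']; linarith
  have hβ'pos : 0 < β' := by rw [hβ']; linarith
  have hev : ∀ᶠ N : ℕ in atTop, (N:ℝ) * (t N)^2 ≤ β' := by
    exact hT.eventually_le_const (show β < β' by rw [hβ']; linarith)
  have hval : (∫ y : ℝ, Real.exp (-((1-β)/2) * y^2)) = Real.sqrt (2*π/(1-β)) := by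
    rw [integral_gaussian]
    congr 1
    field_simp
  rw [← hval]
  have hlim_eq : ∀ y : ℝ, Real.exp (-((1-β)/2) * y^2)
      = Real.exp (-(y^2/2)) * Real.exp (β*y^2/2) := by
    intro y
    rw [← Real.exp_add]
    congr 1
    ring
  apply tendsto_integral_filter_of_dominated_convergence
    (bound := fun y => Real.exp (-((1-β')/2) * y^2))
  · apply Filter.Eventually.of_forall
    intro N
    exact (Continuous.aestronglyMeasurable (by continuity))
  · filter_upwards [hev] with N hN
    apply Filter.Eventually.of_forall
    intro y
    have hch : (0:ℝ) < Real.cosh (t N * y) := Real.cosh_pos _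
    rw [Real.norm_eq_abs, abs_of_nonneg (by positivity)]
    have h1 : (Real.cosh (t N * y))^N ≤ Real.exp ((t N * y)^2/2)^N :=
      pow_le_pow_left₀ hch.le (Real.cosh_le_exp_half_sq _) N
    have h2 : Real.exp ((t N * y)^2/2)^N = Real.exp ((N:ℝ) * (t N * y)^2/2) := by
      rw [← Real.exp_nat_mul]
      congr 1
      ring
    have h3 : (N:ℝ) * (t N * y)^2/2 ≤ β' * y^2 / 2 := by
      have hh : (N:ℝ) * (t N * y)^2 = ((N:ℝ) * (t N)^2) * y^2 := by ring
      rw [hh]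
      have := mul_le_mul_of_nonneg_right hN (sq_nonneg y)
      linarith
    calc Real.exp (-(y^2/2)) * (Real.cosh (t N * y))^N
        ≤ Real.exp (-(y^2/2)) * Real.exp (β' * y^2/2) := by
          apply mul_le_mul_of_nonneg_left _ (Real.exp_pos _).le
          rw [h2] at h1
          exact h1.trans (Real.exp_le_exp.2 h3)
      _ = Real.exp (-((1-β')/2) * y^2) := by
          rw [← Real.exp_add]; congr 1; ring
  · exact integrable_exp_neg_mul_sq (by linarith)
  · apply Filter.Eventually.of_forall
    intro y
    simp_rw [hlim_eq y]
    apply Tendsto.const_mul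
    have hrw : ∀ N : ℕ, (Real.cosh (t N * y))^N
        = Real.exp ((N:ℝ) * Real.log (Real.cosh (t N * y))) := by
      intro N
      rw [Real.exp_nat_mul, Real.exp_log (Real.cosh_pos _)]
    simp_rw [hrw]
    apply (Real.continuous_exp.tendsto _).comp
    have hub : ∀ N : ℕ, (N:ℝ) * Real.log (Real.cosh (t N * y)) ≤ ((N:ℝ) * (t N)^2) * y^2/2 := by
      intro N
      have := log_cosh_le (t N * y)
      calc (N:ℝ) * Real.log (Real.cosh (t N * y)) ≤ (N:ℝ) * ((t N * y)^2/2) := by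
            apply mul_le_mul_of_nonneg_left this (Nat.cast_nonneg N)
        _ = ((N:ℝ) * (t N)^2) * y^2/2 := by ring
    have hlb : ∀ N : ℕ, N ≥ 1 → ((N:ℝ) * (t N)^2) * y^2/2 - ((N:ℝ) * (t N)^2)^2 * y^4/(2*N)
        ≤ (N:ℝ) * Real.log (Real.cosh (t N * y)) := by
      intro N hN
      have hNpos : (0:ℝ) < N := by exact_mod_cast hN
      have := le_log_cosh (t N * y)
      have h := mul_le_mul_of_nonneg_left this (Nat.cast_nonneg N)
      calc ((N:ℝ) * (t N)^2) * y^2/2 - ((N:ℝ) * (t N)^2)^2 * y^4/(2*N)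
          = (N:ℝ) * ((t N * y)^2/2 - (t N * y)^4/2)
              + (((N:ℝ)^2 - (N:ℝ)^2) * (t N)^4 * y^4)/(2*N) := by
            field_simp
            ring
        _ = (N:ℝ) * ((t N * y)^2/2 - (t N * y)^4/2) := by simp
        _ ≤ (N:ℝ) * Real.log (Real.cosh (t N * y)) := h
    have hU : Tendsto (fun N : ℕ => ((N:ℝ) * (t N)^2) * y^2/2) atTop (nhds (β * y^2/2)) :=
      (hT.mul_const _).div_const 2
    have hL : Tendsto (fun N : ℕ => ((N:ℝ) * (t N)^2) * y^2/2 - ((N:ℝ) * (t N)^2)^2 * y^4/(2*N))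
        atTop (nhds (β * y^2/2)) := by
      have h2 : Tendsto (fun N : ℕ => ((N:ℝ) * (t N)^2)^2 * y^4/(2*N)) atTop (nhds 0) := by
        have ha : Tendsto (fun N : ℕ => ((N:ℝ) * (t N)^2)^2 * y^4) atTop (nhds (β^2 * y^4)) :=
          (hT.pow 2).mul_const _
        have hb : Tendsto (fun N : ℕ => (2*(N:ℝ))⁻¹) atTop (nhds 0) := by
          apply Tendsto.inv_tendsto_atTop
          apply Tendsto.const_mul_atTop (by norm_num : (0:ℝ) < 2)
          exact tendsto_natCast_atTop_atTop
        have := ha.mul hb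
        rw [mul_zero] at this
        simpa [div_eq_mul_inv] using this
      have := hU.sub h2
      simpa using this
    apply tendsto_of_tendsto_of_tendsto_of_le_of_le' hL hU
    · filter_upwards [eventually_ge_atTop 1] with N hN using hlb N hN
    · exact Filter.Eventually.of_forall hub

set_option maxHeartbeats 1000000 in
/-- **Theorem 3 (c).** For `0 < β < 1` and `p = p(N)` with `p³N² → ∞`, the expected
partition function satisfies `𝔼 Z_N(β) ∼ e^{(1-p)β²/(8p)} · 2^N / √(1-β)`. -/
theorem EZN_asymptotics (β : ℝ) (hβ : β ∈ Set.Ioo (0 : ℝ) 1)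
    (p : ℕ → ℝ) (hp : ∀ N, p N ∈ Set.Ioc (0 : ℝ) 1)
    (hp3 : Tendsto (fun N : ℕ => (p N) ^ 3 * (N : ℝ) ^ 2) atTop atTop) :
    Tendsto (fun N : ℕ => EZNg N (p N) β (fun _ => 1) /
        (Real.exp ((1 - p N) * β ^ 2 / (8 * p N)) * 2 ^ N / Real.sqrt (1 - β)))
      atTop (nhds 1) := by
  obtain ⟨hβ0, hβ1⟩ := hβ
  have hp0 : ∀ N, 0 < p N := fun N => (hp N).1
  have hp1 : ∀ N, p N ≤ 1 := fun N => (hp N).2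
  have hc0 : ∀ N : ℕ, 0 ≤ β / (2 * (N:ℝ) * p N) := by
    intro N
    apply div_nonneg hβ0.le
    have := (hp0 N).le
    positivity
  -- `c N → 0`
  have hprod : Tendsto (fun N : ℕ => ((p N)^3 * (N:ℝ)^2) * N) atTop atTop :=
    hp3.atTop_mul_atTop₀ tendsto_natCast_atTop_atTop
  have hc3 : Tendsto (fun N : ℕ => (β / (2 * (N:ℝ) * p N))^3) atTop (nhds 0) := by
    have h1 : Tendsto (fun N : ℕ => (β^3/8) * (((p N)^3 * (N:ℝ)^2) * N)⁻¹) atTop (nhds 0) := by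
      have := hprod.inv_tendsto_atTop
      have h2 := this.const_mul (β^3/8)
      simpa using h2
    apply h1.congr'
    filter_upwards [eventually_ge_atTop 1] with N hN
    have hNpos : (0:ℝ) < N := by exact_mod_cast hN
    have hpN := hp0 N
    field_simp
    ring
  have hctend : Tendsto (fun N : ℕ => β / (2 * (N:ℝ) * p N)) atTop (nhds 0) :=
    tendsto_zero_of_pow3 hc0 hc3
  have hc_ev1 : ∀ᶠ N : ℕ in atTop, β / (2 * (N:ℝ) * p N) ≤ 1 :=
    hctend.eventually_le_const (by norm_num : (0:ℝ) < 1)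
  have hinvN : Tendsto (fun N : ℕ => ((N:ℝ))⁻¹) atTop (nhds 0) :=
    tendsto_natCast_atTop_atTop.inv_tendsto_atTop
  -- `p N * c N ≤ 1/2` eventually
  have hpc_ev : ∀ᶠ N : ℕ in atTop, p N * (β / (2 * (N:ℝ) * p N)) ≤ 1/2 := by
    filter_upwards [eventually_ge_atTop 1, eventually_ge_atTop (Nat.ceil β)] with N hN1 hNβ
    have hNpos : (0:ℝ) < N := by
      have : (1:ℝ) ≤ N := by exact_mod_cast hN1
      linarith
    have hpN := hp0 N
    have hNge : β ≤ (N:ℝ) := le_trans (Nat.le_ceil β) (by exact_mod_cast hNβ)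
    have heq : p N * (β / (2 * (N:ℝ) * p N)) = β / (2*(N:ℝ)) := by
      field_simp
    rw [heq, div_le_iff₀ (by positivity)]
    linarith
  -- Part A : the exponential error term tends to `0`
  have hEN : Tendsto (fun N : ℕ => (N:ℝ)^2 * FF (p N) (β / (2 * (N:ℝ) * p N)) / 2
      - (1 - p N) * β^2 / (8 * p N)) atTop (nhds 0) := by
    apply squeeze_zero_norm' (a := fun N : ℕ => (3*β^4/32) * (((p N)^3 * (N:ℝ)^2))⁻¹)
    · filter_upwards [eventually_ge_atTop 1, hc_ev1] with N hN1 hcN1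
      have hNpos : (0:ℝ) < N := by exact_mod_cast hN1
      have hpN := hp0 N
      have happrox := FF_approx hpN (hp1 N) (hc0 N) hcN1
      have hKeq : (1 - p N) * β^2 / (8 * p N)
          = (N:ℝ)^2 * ((p N - (p N)^2) * (β / (2 * (N:ℝ) * p N))^2) / 2 := by
        field_simp
        ring
      rw [hKeq]
      have hEeq : (N:ℝ)^2 * FF (p N) (β / (2 * (N:ℝ) * p N)) / 2
            - (N:ℝ)^2 * ((p N - (p N)^2) * (β / (2 * (N:ℝ) * p N))^2) / 2
          = (N:ℝ)^2 * (FF (p N) (β / (2 * (N:ℝ) * p N))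
            - (p N - (p N)^2) * (β / (2 * (N:ℝ) * p N))^2) / 2 := by
        ring
      rw [hEeq]
      have hbound := mul_le_mul_of_nonneg_left happrox (by positivity : (0:ℝ) ≤ (N:ℝ)^2)
      have heq2 : (N:ℝ)^2 * (3 * p N * (β / (2 * (N:ℝ) * p N))^4) / 2
          = (3*β^4/32) * (((p N)^3 * (N:ℝ)^2))⁻¹ := by
        field_simp
        ring
      rw [Real.norm_eq_abs, abs_div, abs_mul, abs_of_nonneg (by positivity : (0:ℝ) ≤ (N:ℝ)^2),
        abs_of_nonneg (by norm_num : (0:ℝ) ≤ (2:ℝ)), ← heq2]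
      have h2 : (0:ℝ) < 2 := by norm_num
      rw [div_le_div_iff_of_pos_right h2]
      exact hbound
    · have := hp3.inv_tendsto_atTop.const_mul (3*β^4/32)
      simpa using this
  have hexpEN : Tendsto (fun N : ℕ => Real.exp ((N:ℝ)^2 * FF (p N) (β / (2 * (N:ℝ) * p N)) / 2
      - (1 - p N) * β^2 / (8 * p N))) atTop (nhds 1) := by
    have := (Real.continuous_exp.tendsto 0).comp hEN
    simpa [Function.comp_def] using this
  -- Part B : `N * GG → β`
  have ht2 : ∀ N : ℕ, (Real.sqrt (GG (p N) (β / (2 * (N:ℝ) * p N))))^2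
      = GG (p N) (β / (2 * (N:ℝ) * p N)) := fun N =>
    Real.sq_sqrt (GG_nonneg (hp0 N) (hp1 N) (hc0 N))
  have hT : Tendsto (fun N : ℕ =>
      (N:ℝ) * (Real.sqrt (GG (p N) (β / (2 * (N:ℝ) * p N))))^2) atTop (nhds β) := by
    have hrw : (fun N : ℕ => (N:ℝ) * (Real.sqrt (GG (p N) (β / (2 * (N:ℝ) * p N))))^2)
        = fun N : ℕ => (N:ℝ) * GG (p N) (β / (2 * (N:ℝ) * p N)) := by
      funext N
      rw [ht2]
    rw [hrw]
    have hcoshc : Tendsto (fun N : ℕ => β * Real.cosh (β / (2 * (N:ℝ) * p N))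
        + 2*β^2 * ((N:ℝ))⁻¹) atTop (nhds β) := by
      have h1 : Tendsto (fun N : ℕ => Real.cosh (β / (2 * (N:ℝ) * p N))) atTop (nhds 1) := by
        have := (Real.continuous_cosh.tendsto 0).comp hctend
        simpa [Function.comp_def] using this
      have h2 := (h1.const_mul β).add ((hinvN.const_mul (2*β^2)))
      simpa using h2
    have hlow : Tendsto (fun N : ℕ => β - 2*β^2 * ((N:ℝ))⁻¹) atTop (nhds β) := by
      have h2 := (tendsto_const_nhds (x := β) (f := atTop (α := ℕ))).sub
        (hinvN.const_mul (2*β^2))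
      simpa using h2
    apply tendsto_of_tendsto_of_tendsto_of_le_of_le' hlow hcoshc
    · filter_upwards [eventually_ge_atTop 1, hc_ev1, hpc_ev] with N hN1 hc1 hpc
      have hNpos : (0:ℝ) < N := by exact_mod_cast hN1
      have hpN := hp0 N
      have happ := (abs_le.1 (GG_approx hpN (hp1 N) (hc0 N) hc1 hpc)).1
      have hsinh : β / (2 * (N:ℝ) * p N) ≤ Real.sinh (β / (2 * (N:ℝ) * p N)) :=
        Real.self_le_sinh_iff.2 (hc0 N)
      have hNc : (N:ℝ) * (2 * p N * (β / (2 * (N:ℝ) * p N))) = β := by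
        field_simp
      have he : (N:ℝ) * (8 * (p N)^2 * (β / (2 * (N:ℝ) * p N))^2) = 2*β^2 * ((N:ℝ))⁻¹ := by
        field_simp
        ring
      have hmono := mul_le_mul_of_nonneg_left happ (Nat.cast_nonneg N)
      have h1 : (N:ℝ) * (2 * p N * (β / (2 * (N:ℝ) * p N)))
          ≤ (N:ℝ) * (2 * p N * Real.sinh (β / (2 * (N:ℝ) * p N))) := by
        apply mul_le_mul_of_nonneg_left _ (Nat.cast_nonneg N)
        have := mul_le_mul_of_nonneg_left hsinh (by positivity : (0:ℝ) ≤ 2 * p N)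
        linarith
      have hexp : (N:ℝ) * (GG (p N) (β / (2 * (N:ℝ) * p N))
            - 2 * p N * Real.sinh (β / (2 * (N:ℝ) * p N)))
          = (N:ℝ) * GG (p N) (β / (2 * (N:ℝ) * p N))
            - (N:ℝ) * (2 * p N * Real.sinh (β / (2 * (N:ℝ) * p N))) := by ring
      rw [hexp] at hmono
      linarith [hmono, h1, hNc.symm ▸ le_refl β, he]
    · filter_upwards [eventually_ge_atTop 1, hc_ev1, hpc_ev] with N hN1 hc1 hpc
      have hNpos : (0:ℝ) < N := by exact_mod_cast hN1
      have hpN := hp0 N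
      have happ := (abs_le.1 (GG_approx hpN (hp1 N) (hc0 N) hc1 hpc)).2
      have hsinh : Real.sinh (β / (2 * (N:ℝ) * p N))
          ≤ (β / (2 * (N:ℝ) * p N)) * Real.cosh (β / (2 * (N:ℝ) * p N)) :=
        my_sinh_le _ (hc0 N)
      have hNc : (N:ℝ) * (2 * p N * ((β / (2 * (N:ℝ) * p N))
            * Real.cosh (β / (2 * (N:ℝ) * p N))))
          = β * Real.cosh (β / (2 * (N:ℝ) * p N)) := by
        field_simp
      have he : (N:ℝ) * (8 * (p N)^2 * (β / (2 * (N:ℝ) * p N))^2) = 2*β^2 * ((N:ℝ))⁻¹ := by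
        field_simp
        ring
      have hmono := mul_le_mul_of_nonneg_left happ (Nat.cast_nonneg N)
      have h1 : (N:ℝ) * (2 * p N * Real.sinh (β / (2 * (N:ℝ) * p N)))
          ≤ (N:ℝ) * (2 * p N * ((β / (2 * (N:ℝ) * p N))
            * Real.cosh (β / (2 * (N:ℝ) * p N)))) := by
        apply mul_le_mul_of_nonneg_left _ (Nat.cast_nonneg N)
        have := mul_le_mul_of_nonneg_left hsinh (by positivity : (0:ℝ) ≤ 2 * p N)
        linarith
      have hexp : (N:ℝ) * (GG (p N) (β / (2 * (N:ℝ) * p N))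
            - 2 * p N * Real.sinh (β / (2 * (N:ℝ) * p N)))
          = (N:ℝ) * GG (p N) (β / (2 * (N:ℝ) * p N))
            - (N:ℝ) * (2 * p N * Real.sinh (β / (2 * (N:ℝ) * p N))) := by ring
      rw [hexp] at hmono
      linarith [hmono, h1, hNc, he]
  have hJ : Tendsto (fun N : ℕ => ∫ y : ℝ, Real.exp (-(y^2/2))
      * (Real.cosh (Real.sqrt (GG (p N) (β / (2 * (N:ℝ) * p N))) * y))^N) atTop
      (nhds (Real.sqrt (2*Real.pi/(1-β)))) :=
    partB hβ0 hβ1 (fun N => Real.sqrt (GG (p N) (β / (2 * (N:ℝ) * p N)))) hT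
  -- exact identity for the ratio
  have hkey : ∀ᶠ N : ℕ in atTop,
      EZNg N (p N) β (fun _ => 1) /
        (Real.exp ((1 - p N) * β ^ 2 / (8 * p N)) * 2 ^ N / Real.sqrt (1 - β))
      = Real.exp ((N:ℝ)^2 * FF (p N) (β / (2 * (N:ℝ) * p N)) / 2
          - (1 - p N) * β^2 / (8 * p N))
        * (Real.sqrt (1-β) * (Real.sqrt (2*Real.pi))⁻¹
          * ∫ y : ℝ, Real.exp (-(y^2/2))
            * (Real.cosh (Real.sqrt (GG (p N) (β / (2 * (N:ℝ) * p N))) * y))^N) := by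
    apply Filter.Eventually.of_forall
    intro N
    have hpN := hp0 N
    have hEZ : EZNg N (p N) β (fun _ => 1)
        = Real.exp ((N:ℝ)^2 * FF (p N) (β / (2 * (N:ℝ) * p N)) / 2)
          * ((Real.sqrt (2*Real.pi))⁻¹ * ((2:ℝ)^N * ∫ y : ℝ, Real.exp (-(y^2/2))
            * (Real.cosh (Real.sqrt (GG (p N) (β / (2 * (N:ℝ) * p N))) * y))^N)) := by
      rw [EZ_sum N β hpN.le (hp1 N)]
      have hpf : ∀ σ : Fin N → Bool, (∏ k : Fin N × Fin N,
          (1 - p N + p N * Real.exp (β / (2 * (N:ℝ) * p N) * (spin (σ k.1) * spin (σ k.2)))))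
          = Real.exp ((N:ℝ)^2 * FF (p N) (β / (2 * (N:ℝ) * p N)) / 2)
            * Real.exp (GG (p N) (β / (2 * (N:ℝ) * p N)) * (mag σ)^2 / 2) := by
        intro σ
        rw [prod_factor hpN (hp1 N) (β / (2 * (N:ℝ) * p N)) σ, Real.exp_add]
      simp only [hpf]
      rw [← Finset.mul_sum]
      congr 1
      rw [sum_exp_quad N (GG_nonneg hpN (hp1 N) (hc0 N))]
      congr 1
      rw [← MeasureTheory.integral_const_mul]
      congr 1
      funext y
      rw [mul_pow]
      ring
    rw [hEZ]
    generalize (∫ y : ℝ, Real.exp (-(y^2/2)) * (Real.cosh (Real.sqrt (GG (p N) (β / (2 * (N:ℝ) * p N))) * y))^N) = I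
    have hexpK : (0:ℝ) < Real.exp ((1 - p N) * β ^ 2 / (8 * p N)) := Real.exp_pos _
    have h2N : (0:ℝ) < (2:ℝ)^N := by positivity
    have hsβ : (0:ℝ) < Real.sqrt (1-β) := Real.sqrt_pos.2 (by linarith)
    rw [Real.exp_sub]
    field_simp
  -- conclusion
  have hfinal : Tendsto (fun N : ℕ =>
      Real.exp ((N:ℝ)^2 * FF (p N) (β / (2 * (N:ℝ) * p N)) / 2
          - (1 - p N) * β^2 / (8 * p N))
        * (Real.sqrt (1-β) * (Real.sqrt (2*Real.pi))⁻¹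
          * ∫ y : ℝ, Real.exp (-(y^2/2))
            * (Real.cosh (Real.sqrt (GG (p N) (β / (2 * (N:ℝ) * p N))) * y))^N)) atTop
      (nhds (1 * (Real.sqrt (1-β) * (Real.sqrt (2*Real.pi))⁻¹
        * Real.sqrt (2*Real.pi/(1-β))))) :=
    hexpEN.mul (hJ.const_mul _)
  have hval : 1 * (Real.sqrt (1-β) * (Real.sqrt (2*Real.pi))⁻¹ * Real.sqrt (2*Real.pi/(1-β)))
      = 1 := by
    rw [one_mul, Real.sqrt_div (by positivity : (0:ℝ) ≤ 2*Real.pi) (1-β)]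
    have h1 : Real.sqrt (1-β) ≠ 0 := ne_of_gt (Real.sqrt_pos.2 (by linarith))
    have h2 : Real.sqrt (2*Real.pi) ≠ 0 := by positivity
    field_simp
  rw [hval] at hfinal
  exact hfinal.congr' (Filter.EventuallyEq.symm hkey)
end Aux
end
end

section
/- Let β > 0 be fixed and let p = p(N) ∈ (0,1] be a sequence with p(N)·N → ∞. Then there exists a constant C > 0 such that for all sufficiently large N and all σ ∈ {-1,+1}^N, | log E[e^{-βH(σ)}] - ( -β²/8 + N²p(cosh(β/(2Np)) - 1) + (β/(2N))|σ|² ) | ≤ (C/(N²p²)) · (1 + |σ|²/N), where |σ| = σ_1 + ... + σ_N. -/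
open MeasureTheory ProbabilityTheory Filter
open scoped Classical

noncomputable section

set_option maxHeartbeats 1000000

open Finset

lemma log_one_add_cubic {x : ℝ} (hx : |x| ≤ 1/2) :
    |Real.log (1+x) - (x - x^2/2 + x^3/3)| ≤ 2*x^4 := by
  have h := Real.abs_log_sub_add_sum_range_le (x := -x) (by rw [abs_neg]; linarith [abs_nonneg x]) 3
  rw [abs_neg] at h
  have hs : (∑ i ∈ range 3, (-x) ^ (i + 1) / (i + 1)) = -x + x^2/2 - x^3/3 := by
    simp [Finset.sum_range_succ]; ring
  rw [hs] at h
  have h1 : (1 : ℝ) - -x = 1 + x := by ring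
  rw [h1] at h
  have h2 : |x|^4 / (1 - |x|) ≤ 2 * x^4 := by
    rw [div_le_iff₀ (by linarith)]
    have : |x|^4 = x^4 := by rw [← abs_pow, abs_of_nonneg (by positivity)]
    nlinarith [abs_nonneg x, pow_nonneg (abs_nonneg x) 4]
  calc |Real.log (1+x) - (x - x^2/2 + x^3/3)| = |(-x + x^2/2 - x^3/3) + Real.log (1+x)| := by
        congr 1; ring
    _ ≤ |x|^4/(1-|x|) := h
    _ ≤ 2*x^4 := h2

lemma exp_cubic {t : ℝ} (ht : |t| ≤ 1) :
    |Real.exp t - (1 + t + t^2/2 + t^3/6)| ≤ t^4 := by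
  have h := Real.exp_bound ht (n := 4) (by norm_num)
  have hs : (∑ i ∈ range 4, t ^ i / (Nat.factorial i) : ℝ) = 1 + t + t^2/2 + t^3/6 := by
    norm_num [Finset.sum_range_succ, Nat.factorial]
  rw [hs] at h
  have habs : |t|^4 = t^4 := by rw [← abs_pow, abs_of_nonneg (by positivity)]
  refine h.trans ?_
  rw [habs]
  have : ((Nat.succ 4 : ℕ) : ℝ) / ((Nat.factorial 4 : ℕ) * (4:ℕ)) = 5/96 := by
    norm_num [Nat.factorial]
  rw [this]
  nlinarith [pow_nonneg (abs_nonneg t) 4, habs]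

lemma estB {p t : ℝ} (hp0 : 0 < p) (hp1 : p ≤ 1) (ht0 : 0 < t) (ht : t ≤ 1/4) :
    |(Real.log (1 + p*(Real.exp t - 1)) - Real.log (1 + p*(Real.exp (-t) - 1)))/2 - p*t|
      ≤ 14 * p * t^3 := by
  set u : ℝ := Real.exp t - 1 with hu_def
  set v : ℝ := Real.exp (-t) - 1 with hv_def
  have hdu : |u - (t + t^2/2 + t^3/6)| ≤ t^4 := by
    have := exp_cubic (t := t) (by rw [abs_of_pos ht0]; linarith)
    calc |u - (t + t^2/2 + t^3/6)| = |Real.exp t - (1 + t + t^2/2 + t^3/6)| := by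
          congr 1; rw [hu_def]; ring
      _ ≤ t^4 := this
  have hdv : |v - (-t + t^2/2 - t^3/6)| ≤ t^4 := by
    have := exp_cubic (t := -t) (by rw [abs_neg, abs_of_pos ht0]; linarith)
    calc |v - (-t + t^2/2 - t^3/6)| = |Real.exp (-t) - (1 + (-t) + (-t)^2/2 + (-t)^3/6)| := by
          congr 1; rw [hv_def]; ring
      _ ≤ (-t)^4 := this
      _ = t^4 := by ring
  rw [abs_le] at hdu hdv
  have ht21 : t^2 ≤ t/4 := by nlinarith
  have ht32 : t^3 ≤ t^2/4 := by nlinarith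
  have ht4 : t^4 ≤ t^3/4 := by nlinarith
  have hu2 : |u| ≤ 2*t := by
    rw [abs_le]; constructor <;> [linarith [hdu.1]; linarith [hdu.2]]
  have hv2 : |v| ≤ 2*t := by
    rw [abs_le]; constructor <;> [linarith [hdv.1]; linarith [hdv.2]]
  have ha : |p*u| ≤ 1/2 := by
    rw [abs_mul, abs_of_pos hp0]
    calc p * |u| ≤ 1 * (2*t) := by
          apply mul_le_mul hp1 hu2 (abs_nonneg u) zero_le_one
      _ ≤ 1/2 := by linarith
  have hb : |p*v| ≤ 1/2 := by
    rw [abs_mul, abs_of_pos hp0]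
    calc p * |v| ≤ 1 * (2*t) := by
          apply mul_le_mul hp1 hv2 (abs_nonneg v) zero_le_one
      _ ≤ 1/2 := by linarith
  have hla := log_one_add_cubic ha
  have hlb := log_one_add_cubic hb
  -- key decomposition
  set La : ℝ := Real.log (1 + p*u)
  set Lb : ℝ := Real.log (1 + p*v)
  set Ra : ℝ := La - (p*u - (p*u)^2/2 + (p*u)^3/3) with hRa
  set Rb : ℝ := Lb - (p*v - (p*v)^2/2 + (p*v)^3/3) with hRb
  have key : (La - Lb)/2 - p*t
      = (Ra - Rb)/2 + (p/2)*(u - v - 2*t) - (p^2/4)*(u^2 - v^2) + (p^3/6)*(u^3 - v^3) := by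
    rw [hRa, hRb]; ring
  have habs : ∀ x : ℝ, |x| ≤ 2*t → x^4 ≤ 16*t^4 := by
    intro x hx
    calc x^4 = |x|^4 := by rw [← abs_pow, abs_of_nonneg (by positivity)]
      _ ≤ (2*t)^4 := by apply pow_le_pow_left₀ (abs_nonneg x) hx
      _ = 16*t^4 := by ring
  have hp4 : p^4 ≤ p := by
    calc p^4 ≤ p^1 := pow_le_pow_of_le_one hp0.le hp1 (by norm_num)
      _ = p := pow_one p
  have hRa' : |Ra| ≤ 32*p*t^4 := by
    refine hla.trans ?_
    have hu4 := habs u hu2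
    calc 2*(p*u)^4 = 2*(p^4*u^4) := by ring
      _ ≤ 2*(p^4*(16*t^4)) := by gcongr
      _ = 32*(p^4*t^4) := by ring
      _ ≤ 32*(p*t^4) := by gcongr
      _ = 32*p*t^4 := by ring
  have hRb' : |Rb| ≤ 32*p*t^4 := by
    refine hlb.trans ?_
    have hv4 := habs v hv2
    calc 2*(p*v)^4 = 2*(p^4*v^4) := by ring
      _ ≤ 2*(p^4*(16*t^4)) := by gcongr
      _ = 32*(p^4*t^4) := by ring
      _ ≤ 32*(p*t^4) := by gcongr
      _ = 32*p*t^4 := by ring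
  have h1 : |u - v - 2*t| ≤ t^3 := by
    rw [abs_le]
    constructor <;> [linarith [hdu.1, hdv.2]; linarith [hdu.2, hdv.1]]
  have huv : |u + v| ≤ 2*t^2 := by
    rw [abs_le]
    constructor <;> [linarith [hdu.1, hdv.1]; linarith [hdu.2, hdv.2]]
  have huv' : |u - v| ≤ 3*t := by
    rw [abs_le]
    constructor <;> [linarith [hdu.1, hdv.2]; linarith [hdu.2, hdv.1]]
  have h2 : |u^2 - v^2| ≤ 6*t^3 := by
    have : u^2 - v^2 = (u+v)*(u-v) := by ring
    rw [this, abs_mul]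
    calc |u + v| * |u - v| ≤ (2*t^2)*(3*t) := by
          apply mul_le_mul huv huv' (abs_nonneg _) (by positivity)
      _ = 6*t^3 := by ring
  have h3 : |u^3 - v^3| ≤ 16*t^3 := by
    have hu3 : |u^3| ≤ 8*t^3 := by
      rw [abs_pow]
      calc |u|^3 ≤ (2*t)^3 := pow_le_pow_left₀ (abs_nonneg u) hu2 3
        _ = 8*t^3 := by ring
    have hv3 : |v^3| ≤ 8*t^3 := by
      rw [abs_pow]
      calc |v|^3 ≤ (2*t)^3 := pow_le_pow_left₀ (abs_nonneg v) hv2 3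
        _ = 8*t^3 := by ring
    calc |u^3 - v^3| ≤ |u^3| + |v^3| := abs_sub _ _
      _ ≤ 16*t^3 := by linarith
  rw [key]
  have step : |(Ra - Rb)/2 + (p/2)*(u - v - 2*t) - (p^2/4)*(u^2 - v^2) + (p^3/6)*(u^3 - v^3)|
      ≤ |(Ra - Rb)/2| + |(p/2)*(u - v - 2*t)| + |(p^2/4)*(u^2 - v^2)| + |(p^3/6)*(u^3 - v^3)| := by
    calc _ ≤ |(Ra - Rb)/2 + (p/2)*(u - v - 2*t) - (p^2/4)*(u^2 - v^2)| + |(p^3/6)*(u^3 - v^3)| :=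
          abs_add_le _ _
      _ ≤ |(Ra - Rb)/2 + (p/2)*(u - v - 2*t)| + |(p^2/4)*(u^2 - v^2)| + |(p^3/6)*(u^3 - v^3)| := by
          gcongr; exact abs_sub _ _
      _ ≤ _ := by gcongr; exact abs_add_le _ _
  refine step.trans ?_
  have e1 : |(Ra - Rb)/2| ≤ 32*p*t^4 := by
    rw [abs_div]
    have : |Ra - Rb| ≤ 64*p*t^4 := (abs_sub _ _).trans (by linarith)
    simp only [abs_two]
    linarith
  have e2 : |(p/2)*(u - v - 2*t)| ≤ (p/2)*t^3 := by
    rw [abs_mul, abs_of_pos (by positivity : (0:ℝ) < p/2)]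
    exact mul_le_mul_of_nonneg_left h1 (by positivity)
  have e3 : |(p^2/4)*(u^2 - v^2)| ≤ (p^2/4)*(6*t^3) := by
    rw [abs_mul, abs_of_pos (by positivity : (0:ℝ) < p^2/4)]
    exact mul_le_mul_of_nonneg_left h2 (by positivity)
  have e4 : |(p^3/6)*(u^3 - v^3)| ≤ (p^3/6)*(16*t^3) := by
    rw [abs_mul, abs_of_pos (by positivity : (0:ℝ) < p^3/6)]
    exact mul_le_mul_of_nonneg_left h3 (by positivity)
  have hp2 : p^2 ≤ p := by
    calc p^2 ≤ p^1 := pow_le_pow_of_le_one hp0.le hp1 (by norm_num)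
      _ = p := pow_one p
  have hp3 : p^3 ≤ p := by
    calc p^3 ≤ p^1 := pow_le_pow_of_le_one hp0.le hp1 (by norm_num)
      _ = p := pow_one p
  have ht3 : (0:ℝ) < t^3 := by positivity
  have hA : p*t^4 ≤ p*(t^3/4) := mul_le_mul_of_nonneg_left ht4 hp0.le
  have hB : p^2*t^3 ≤ p*t^3 := mul_le_mul_of_nonneg_right hp2 ht3.le
  have hC : p^3*t^3 ≤ p*t^3 := mul_le_mul_of_nonneg_right hp3 ht3.le
  linarith only [e1, e2, e3, e4, hA, hB, hC, step, mul_pos hp0 ht3]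

lemma estA {p t : ℝ} (hp0 : 0 < p) (hp1 : p ≤ 1) (ht0 : 0 < t) (ht : t ≤ 1/4) :
    |(Real.log (1 + p*(Real.exp t - 1)) + Real.log (1 + p*(Real.exp (-t) - 1)))/2
      - (p*(Real.cosh t - 1) - p^2*t^2/2)| ≤ 40 * p^2 * t^4 := by
  set u : ℝ := Real.exp t - 1 with hu_def
  set v : ℝ := Real.exp (-t) - 1 with hv_def
  have hdu : |u - (t + t^2/2 + t^3/6)| ≤ t^4 := by
    have := exp_cubic (t := t) (by rw [abs_of_pos ht0]; linarith)
    calc |u - (t + t^2/2 + t^3/6)| = |Real.exp t - (1 + t + t^2/2 + t^3/6)| := by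
          congr 1; rw [hu_def]; ring
      _ ≤ t^4 := this
  have hdv : |v - (-t + t^2/2 - t^3/6)| ≤ t^4 := by
    have := exp_cubic (t := -t) (by rw [abs_neg, abs_of_pos ht0]; linarith)
    calc |v - (-t + t^2/2 - t^3/6)| = |Real.exp (-t) - (1 + (-t) + (-t)^2/2 + (-t)^3/6)| := by
          congr 1; rw [hv_def]; ring
      _ ≤ (-t)^4 := this
      _ = t^4 := by ring
  rw [abs_le] at hdu hdv
  have ht21 : t^2 ≤ t/4 := by nlinarith
  have ht32 : t^3 ≤ t^2/4 := by nlinarith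
  have ht4 : t^4 ≤ t^3/4 := by nlinarith
  have ht64 : t^6 ≤ t^4/4 := by nlinarith
  have hu2 : |u| ≤ 2*t := by
    rw [abs_le]; constructor <;> [linarith [hdu.1]; linarith [hdu.2]]
  have hv2 : |v| ≤ 2*t := by
    rw [abs_le]; constructor <;> [linarith [hdv.1]; linarith [hdv.2]]
  have ha : |p*u| ≤ 1/2 := by
    rw [abs_mul, abs_of_pos hp0]
    calc p * |u| ≤ 1 * (2*t) := by
          apply mul_le_mul hp1 hu2 (abs_nonneg u) zero_le_one
      _ ≤ 1/2 := by linarith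
  have hb : |p*v| ≤ 1/2 := by
    rw [abs_mul, abs_of_pos hp0]
    calc p * |v| ≤ 1 * (2*t) := by
          apply mul_le_mul hp1 hv2 (abs_nonneg v) zero_le_one
      _ ≤ 1/2 := by linarith
  have hla := log_one_add_cubic ha
  have hlb := log_one_add_cubic hb
  set La : ℝ := Real.log (1 + p*u)
  set Lb : ℝ := Real.log (1 + p*v)
  set Ra : ℝ := La - (p*u - (p*u)^2/2 + (p*u)^3/3) with hRa
  set Rb : ℝ := Lb - (p*v - (p*v)^2/2 + (p*v)^3/3) with hRb
  have hcosh : Real.cosh t - 1 = (u + v)/2 := by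
    rw [Real.cosh_eq, hu_def, hv_def]; ring
  have key : (La + Lb)/2 - (p*(Real.cosh t - 1) - p^2*t^2/2)
      = (Ra + Rb)/2 - (p^2/4)*(u^2 + v^2 - 2*t^2) + (p^3/6)*(u^3 + v^3) := by
    rw [hcosh, hRa, hRb]; ring
  have habs : ∀ x : ℝ, |x| ≤ 2*t → x^4 ≤ 16*t^4 := by
    intro x hx
    calc x^4 = |x|^4 := by rw [← abs_pow, abs_of_nonneg (by positivity)]
      _ ≤ (2*t)^4 := by apply pow_le_pow_left₀ (abs_nonneg x) hx
      _ = 16*t^4 := by ring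
  have hp42 : p^4 ≤ p^2 := pow_le_pow_of_le_one hp0.le hp1 (by norm_num)
  have hp32 : p^3 ≤ p^2 := pow_le_pow_of_le_one hp0.le hp1 (by norm_num)
  have hRa' : |Ra| ≤ 32*p^2*t^4 := by
    refine hla.trans ?_
    have hu4 := habs u hu2
    calc 2*(p*u)^4 = 2*(p^4*u^4) := by ring
      _ ≤ 2*(p^4*(16*t^4)) := by gcongr
      _ = 32*(p^4*t^4) := by ring
      _ ≤ 32*(p^2*t^4) := by gcongr
      _ = 32*p^2*t^4 := by ring
  have hRb' : |Rb| ≤ 32*p^2*t^4 := by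
    refine hlb.trans ?_
    have hv4 := habs v hv2
    calc 2*(p*v)^4 = 2*(p^4*v^4) := by ring
      _ ≤ 2*(p^4*(16*t^4)) := by gcongr
      _ = 32*(p^4*t^4) := by ring
      _ ≤ 32*(p^2*t^4) := by gcongr
      _ = 32*p^2*t^4 := by ring
  have huv : |u + v| ≤ 2*t^2 := by
    rw [abs_le]
    constructor <;> [linarith [hdu.1, hdv.1]; linarith [hdu.2, hdv.2]]
  -- quadratic bound
  have hq : |u^2 + v^2 - 2*t^2| ≤ 4*t^4 := by
    have eq2 : u^2 + v^2 - 2*t^2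
        = ((7/6)*t^4 + t^6/18)
          + (u - (t + t^2/2 + t^3/6)) * (u + (t + t^2/2 + t^3/6))
          + (v - (-t + t^2/2 - t^3/6)) * (v + (-t + t^2/2 - t^3/6)) := by ring
    have b1 : |(u - (t + t^2/2 + t^3/6)) * (u + (t + t^2/2 + t^3/6))| ≤ t^4 := by
      rw [abs_mul]
      have h1 : |u + (t + t^2/2 + t^3/6)| ≤ 1 := by
        rw [abs_le]; constructor <;> [linarith [hdu.1]; linarith [hdu.2]]
      calc |u - (t + t^2/2 + t^3/6)| * |u + (t + t^2/2 + t^3/6)| ≤ t^4 * 1 := by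
            apply mul_le_mul (abs_le.mpr hdu) h1 (abs_nonneg _) (by positivity)
        _ = t^4 := by ring
    have b2 : |(v - (-t + t^2/2 - t^3/6)) * (v + (-t + t^2/2 - t^3/6))| ≤ t^4 := by
      rw [abs_mul]
      have h1 : |v + (-t + t^2/2 - t^3/6)| ≤ 1 := by
        rw [abs_le]; constructor <;> [linarith [hdv.1]; linarith [hdv.2]]
      calc |v - (-t + t^2/2 - t^3/6)| * |v + (-t + t^2/2 - t^3/6)| ≤ t^4 * 1 := by
            apply mul_le_mul (abs_le.mpr hdv) h1 (abs_nonneg _) (by positivity)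
        _ = t^4 := by ring
    rw [abs_le] at b1 b2
    rw [eq2, abs_le]
    have ht4p : (0:ℝ) ≤ t^4 := by positivity
    have ht6p : (0:ℝ) ≤ t^6 := by positivity
    constructor
    · linarith only [b1.1, b2.1, ht4p, ht6p]
    · linarith only [b1.2, b2.2, ht64, ht4p]
  have hcube : |u^3 + v^3| ≤ 24*t^4 := by
    have eqc : u^3 + v^3 = (u + v) * (u^2 - u*v + v^2) := by ring
    rw [eqc, abs_mul]
    have h2 : |u^2 - u*v + v^2| ≤ 12*t^2 := by
      have l1 : |u^2| ≤ 4*t^2 := by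
        rw [abs_pow]; calc |u|^2 ≤ (2*t)^2 := pow_le_pow_left₀ (abs_nonneg u) hu2 2
          _ = 4*t^2 := by ring
      have l2 : |v^2| ≤ 4*t^2 := by
        rw [abs_pow]; calc |v|^2 ≤ (2*t)^2 := pow_le_pow_left₀ (abs_nonneg v) hv2 2
          _ = 4*t^2 := by ring
      have l3 : |u*v| ≤ 4*t^2 := by
        rw [abs_mul]
        calc |u| * |v| ≤ (2*t) * (2*t) := by
              apply mul_le_mul hu2 hv2 (abs_nonneg v) (by positivity)
          _ = 4*t^2 := by ring
      calc |u^2 - u*v + v^2| ≤ |u^2 - u*v| + |v^2| := abs_add_le _ _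
        _ ≤ |u^2| + |u*v| + |v^2| := by gcongr; exact abs_sub _ _
        _ ≤ 12*t^2 := by linarith
    calc |u + v| * |u^2 - u*v + v^2| ≤ (2*t^2) * (12*t^2) := by
          apply mul_le_mul huv h2 (abs_nonneg _) (by positivity)
      _ = 24*t^4 := by ring
  rw [key]
  have step : |(Ra + Rb)/2 - (p^2/4)*(u^2 + v^2 - 2*t^2) + (p^3/6)*(u^3 + v^3)|
      ≤ |(Ra + Rb)/2| + |(p^2/4)*(u^2 + v^2 - 2*t^2)| + |(p^3/6)*(u^3 + v^3)| := by
    calc _ ≤ |(Ra + Rb)/2 - (p^2/4)*(u^2 + v^2 - 2*t^2)| + |(p^3/6)*(u^3 + v^3)| := abs_add_le _ _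
      _ ≤ _ := by gcongr; exact abs_sub _ _
  refine step.trans ?_
  have e1 : |(Ra + Rb)/2| ≤ 32*p^2*t^4 := by
    rw [abs_div]
    have : |Ra + Rb| ≤ 64*p^2*t^4 := (abs_add_le _ _).trans (by linarith)
    simp only [abs_two]
    linarith
  have e2 : |(p^2/4)*(u^2 + v^2 - 2*t^2)| ≤ (p^2/4)*(4*t^4) := by
    rw [abs_mul, abs_of_pos (by positivity : (0:ℝ) < p^2/4)]
    exact mul_le_mul_of_nonneg_left hq (by positivity)
  have e3 : |(p^3/6)*(u^3 + v^3)| ≤ (p^3/6)*(24*t^4) := by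
    rw [abs_mul, abs_of_pos (by positivity : (0:ℝ) < p^3/6)]
    exact mul_le_mul_of_nonneg_left hcube (by positivity)
  have ht4p : (0:ℝ) < t^4 := by positivity
  have hC : p^3*t^4 ≤ p^2*t^4 := mul_le_mul_of_nonneg_right hp32 ht4p.le
  linarith only [e1, e2, e3, hC, mul_pos (mul_pos hp0 hp0) ht4p, step,
    mul_pos (pow_pos hp0 2) ht4p]

lemma bern_single_integral {p : ℝ} (hp0 : 0 < p) (hp1 : p ≤ 1) (c : ℝ) :
    ∫ b : Bool, Real.exp (c * (if b then 1 else 0))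
      ∂((PMF.bernoulli (min 1 (Real.toNNReal p)) (min_le_left _ _)).toMeasure)
    = 1 - p + p * Real.exp c := by
  rw [PMF.integral_eq_sum]
  have hmin : min 1 (Real.toNNReal p) = Real.toNNReal p :=
    min_eq_right (Real.toNNReal_le_one.mpr hp1)
  have htrue : ((PMF.bernoulli (min 1 (Real.toNNReal p)) (min_le_left _ _)) true).toReal = p := by
    rw [PMF.bernoulli_apply, Bool.cond_true, hmin]
    simp [hp0.le]
  have hfalse : ((PMF.bernoulli (min 1 (Real.toNNReal p)) (min_le_left _ _)) false).toReal
      = 1 - p := by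
    rw [PMF.bernoulli_apply, Bool.cond_false, hmin]
    rw [ENNReal.coe_toReal, NNReal.coe_sub (Real.toNNReal_le_one.mpr hp1), NNReal.coe_one,
      Real.coe_toNNReal _ hp0.le]
  rw [Fintype.sum_bool, htrue, hfalse]
  simp [Real.exp_zero]
  ring

lemma bern_integral_prod (N : ℕ) {p : ℝ} (hp0 : 0 < p) (hp1 : p ≤ 1)
    (c : Fin N × Fin N → ℝ) :
    ∫ ω : Fin N × Fin N → Bool,
        (∏ q : Fin N × Fin N, Real.exp (c q * (if ω q then 1 else 0))) ∂(bern N p)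
    = ∏ q : Fin N × Fin N, (1 - p + p * Real.exp (c q)) := by
  letI : MeasureSpace Bool :=
    ⟨(PMF.bernoulli (min 1 (Real.toNNReal p)) (min_le_left _ _)).toMeasure⟩
  haveI : SigmaFinite (volume : Measure Bool) := by
    have : IsProbabilityMeasure (volume : Measure Bool) :=
      PMF.toMeasure.isProbabilityMeasure _
    infer_instance
  have hvol : bern N p = (volume : Measure (Fin N × Fin N → Bool)) := rfl
  rw [hvol]
  rw [MeasureTheory.integral_fintype_prod_volume_eq_prod (ι := Fin N × Fin N) (E := fun _ => Bool)
    (f := fun q b => Real.exp (c q * (if b then 1 else 0)))]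
  exact Finset.prod_congr rfl fun q _ => bern_single_integral hp0 hp1 (c q)

lemma integral_exp_hamil (N : ℕ) {p β : ℝ} (hp0 : 0 < p) (hp1 : p ≤ 1) (σ : Fin N → Bool) :
    ∫ ω, Real.exp (-β * hamil N p ω σ) ∂(bern N p)
    = ∏ q : Fin N × Fin N,
        (1 - p + p * Real.exp (β/(2*N*p) * (spin (σ q.1) * spin (σ q.2)))) := by
  have hpt : ∀ ω : Fin N × Fin N → Bool, -β * hamil N p ω σ
      = ∑ q : Fin N × Fin N,
          (β/(2*N*p) * (spin (σ q.1) * spin (σ q.2))) * (if ω q then 1 else 0) := by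
    intro ω
    rw [Fintype.sum_prod_type]
    unfold hamil
    rw [show -β * (-(1 / (2 * (N:ℝ) * p)) * ∑ i : Fin N, ∑ j : Fin N,
        (if ω (i, j) then (1:ℝ) else 0) * spin (σ i) * spin (σ j))
      = (β / (2 * (N:ℝ) * p)) * ∑ i : Fin N, ∑ j : Fin N,
        (if ω (i, j) then (1:ℝ) else 0) * spin (σ i) * spin (σ j) from by ring,
      Finset.mul_sum]
    refine Finset.sum_congr rfl fun i _ => ?_
    rw [Finset.mul_sum]
    refine Finset.sum_congr rfl fun j _ => ?_
    ring
  calc ∫ ω, Real.exp (-β * hamil N p ω σ) ∂(bern N p)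
      = ∫ ω : Fin N × Fin N → Bool, (∏ q : Fin N × Fin N,
          Real.exp ((β/(2*N*p) * (spin (σ q.1) * spin (σ q.2))) * (if ω q then 1 else 0)))
          ∂(bern N p) := by
        refine integral_congr_ae (Filter.Eventually.of_forall fun ω => ?_)
        simp only []
        rw [hpt ω, Real.exp_sum]
    _ = _ := bern_integral_prod N hp0 hp1 _

lemma spin_mul_cases {N : ℕ} (σ : Fin N → Bool) (i j : Fin N) :
    spin (σ i) * spin (σ j) = 1 ∨ spin (σ i) * spin (σ j) = -1 := by
  unfold spin
  rcases σ i <;> rcases σ j <;> norm_num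

lemma log_prod_form (N : ℕ) {p t : ℝ} (hp0 : 0 < p) (hp1 : p ≤ 1) (σ : Fin N → Bool) :
    Real.log (∏ q : Fin N × Fin N,
        (1 - p + p * Real.exp (t * (spin (σ q.1) * spin (σ q.2)))))
    = (N:ℝ)^2 * ((Real.log (1 + p*(Real.exp t - 1)) + Real.log (1 + p*(Real.exp (-t) - 1)))/2)
      + (mag σ)^2 * ((Real.log (1 + p*(Real.exp t - 1)) - Real.log (1 + p*(Real.exp (-t) - 1)))/2) := by
  set A : ℝ := (Real.log (1 + p*(Real.exp t - 1)) + Real.log (1 + p*(Real.exp (-t) - 1)))/2 with hA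
  set B : ℝ := (Real.log (1 + p*(Real.exp t - 1)) - Real.log (1 + p*(Real.exp (-t) - 1)))/2 with hB
  have hpos : ∀ x : ℝ, 0 < 1 - p + p * Real.exp x := fun x => by
    have := mul_pos hp0 (Real.exp_pos x)
    linarith
  rw [Real.log_prod (fun q _ => (hpos _).ne')]
  have hterm : ∀ q : Fin N × Fin N,
      Real.log (1 - p + p * Real.exp (t * (spin (σ q.1) * spin (σ q.2))))
      = A + (spin (σ q.1) * spin (σ q.2)) * B := by
    intro q
    rcases spin_mul_cases σ q.1 q.2 with h | h <;> rw [h]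
    · rw [mul_one, one_mul, hA, hB]
      have : 1 - p + p * Real.exp t = 1 + p*(Real.exp t - 1) := by ring
      rw [this]; ring
    · rw [mul_neg_one, neg_one_mul, hA, hB]
      have : 1 - p + p * Real.exp (-t) = 1 + p*(Real.exp (-t) - 1) := by ring
      rw [this]; ring
  rw [Finset.sum_congr rfl (fun q _ => hterm q), Finset.sum_add_distrib,
    Finset.sum_const, ← Finset.sum_mul]
  have hsum : ∑ q : Fin N × Fin N, spin (σ q.1) * spin (σ q.2) = (mag σ)^2 := by
    rw [Fintype.sum_prod_type]
    rw [mag, sq, Finset.sum_mul_sum]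
  rw [hsum]
  have hcard : (Finset.univ : Finset (Fin N × Fin N)).card = N^2 := by
    simp [sq]
  rw [hcard]
  push_cast
  ring


/-- **Lemma 3.** For fixed `β > 0` and `p = p(N)` with `pN → ∞`, there is `C > 0` such that
for all large `N` and all `σ ∈ {-1,+1}^N`,
`|log 𝔼 e^{-βH(σ)} - (-β²/8 + N²p(cosh(β/(2Np)) - 1) + β|σ|²/(2N))| ≤ C/(N²p²) · (1 + |σ|²/N)`. -/
theorem log_expectation_exp_H (β : ℝ) (hβ : 0 < β)
    (p : ℕ → ℝ) (hp : ∀ N, p N ∈ Set.Ioc (0 : ℝ) 1)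
    (hpN : Tendsto (fun N : ℕ => p N * (N : ℝ)) atTop atTop) :
    ∃ C > (0 : ℝ), ∀ᶠ N : ℕ in atTop, ∀ σ : Fin N → Bool,
      |Real.log (∫ ω, Real.exp (-β * hamil N (p N) ω σ) ∂(bern N (p N)))
          - (-β ^ 2 / 8 + (N : ℝ) ^ 2 * p N * (Real.cosh (β / (2 * N * p N)) - 1)
              + β / (2 * N) * (mag σ) ^ 2)|
        ≤ C / ((N : ℝ) ^ 2 * (p N) ^ 2) * (1 + (mag σ) ^ 2 / N) := by
  refine ⟨3*β^4 + 2*β^3, by nlinarith [pow_pos hβ 3, pow_pos hβ 4], ?_⟩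
  filter_upwards [hpN.eventually_ge_atTop (2*β)] with N hN σ
  obtain ⟨hp0, hp1⟩ := hp N
  have hn0 : (0:ℝ) < N := by
    rcases Nat.eq_zero_or_pos N with h | h
    · exfalso; rw [h] at hN; simp at hN; nlinarith
    · exact_mod_cast h
  set pp := p N with hpp
  set t : ℝ := β / (2 * N * pp) with htdef
  have ht0 : 0 < t := by rw [htdef]; positivity
  have ht14 : t ≤ 1/4 := by
    rw [htdef, div_le_iff₀ (by positivity)]
    nlinarith
  rw [integral_exp_hamil N hp0 hp1 σ, log_prod_form N hp0 hp1 σ]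
  set m : ℝ := mag σ with hm
  set A : ℝ := (Real.log (1 + pp*(Real.exp t - 1)) + Real.log (1 + pp*(Real.exp (-t) - 1)))/2
    with hAdef
  set B : ℝ := (Real.log (1 + pp*(Real.exp t - 1)) - Real.log (1 + pp*(Real.exp (-t) - 1)))/2
    with hBdef
  have hA := estA hp0 hp1 ht0 ht14
  have hB := estB hp0 hp1 ht0 ht14
  rw [← hAdef] at hA
  rw [← hBdef] at hB
  have e1 : β^2/8 = (N:ℝ)^2 * pp^2 * t^2/2 := by
    rw [htdef]; field_simp; ring
  have e2 : β/(2*(N:ℝ)) = pp * t := by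
    rw [htdef]; field_simp
  have hsplit : (N:ℝ)^2 * A + m^2 * B
      - (-β^2/8 + (N:ℝ)^2*pp*(Real.cosh t - 1) + β/(2*(N:ℝ)) * m^2)
      = (N:ℝ)^2 * (A - (pp*(Real.cosh t - 1) - pp^2*t^2/2)) + m^2 * (B - pp*t) := by
    linear_combination e1 - m^2 * e2
  rw [hsplit]
  have step1 : |(N:ℝ)^2 * (A - (pp*(Real.cosh t - 1) - pp^2*t^2/2)) + m^2 * (B - pp*t)|
      ≤ (N:ℝ)^2 * (40*pp^2*t^4) + m^2 * (14*pp*t^3) := by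
    calc |(N:ℝ)^2 * (A - (pp*(Real.cosh t - 1) - pp^2*t^2/2)) + m^2 * (B - pp*t)|
        ≤ |(N:ℝ)^2 * (A - (pp*(Real.cosh t - 1) - pp^2*t^2/2))| + |m^2 * (B - pp*t)| :=
          abs_add_le _ _
      _ ≤ (N:ℝ)^2 * (40*pp^2*t^4) + m^2 * (14*pp*t^3) := by
          rw [abs_mul, abs_mul, abs_of_nonneg (by positivity : (0:ℝ) ≤ (N:ℝ)^2),
            abs_of_nonneg (by positivity : (0:ℝ) ≤ m^2)]
          gcongr
  refine step1.trans ?_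
  have eq1 : (N:ℝ)^2 * (40*pp^2*t^4) = (5/2)*β^4 / ((N:ℝ)^2 * pp^2) := by
    rw [htdef]; field_simp; ring
  have eq2 : m^2 * (14*pp*t^3) = (7/4)*β^3 * (m^2 / ((N:ℝ)^2 * pp^2) / (N:ℝ)) := by
    rw [htdef]; field_simp; ring
  rw [eq1, eq2]
  have hpos : (0:ℝ) < (N:ℝ)^2 * pp^2 := by positivity
  have hC1 : (5/2)*β^4 ≤ 3*β^4 + 2*β^3 := by nlinarith [pow_pos hβ 3, pow_pos hβ 4]
  have hC2 : (7/4)*β^3 ≤ 3*β^4 + 2*β^3 := by nlinarith [pow_pos hβ 3, pow_pos hβ 4]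
  have hrhs : (3*β^4 + 2*β^3) / ((N:ℝ)^2 * pp^2) * (1 + m^2/(N:ℝ))
      = (3*β^4 + 2*β^3) / ((N:ℝ)^2 * pp^2)
        + (3*β^4 + 2*β^3) * (m^2 / ((N:ℝ)^2 * pp^2) / (N:ℝ)) := by
    field_simp
  rw [hrhs]
  have hm2 : (0:ℝ) ≤ m^2 / ((N:ℝ)^2 * pp^2) / (N:ℝ) := by positivity
  gcongr
end
end
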